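/- Define K(k) = ∫_0^{π/2} (1 − k² sin²θ)^{-1/2} dθ for 0 ≤ k < 1 (the complete elliptic integral of the first kind). Then for every λ with 0 < λ < 1 (Landen's descending transformation): K(√(1−λ)) = (2/(1+√λ)) · K((1−√λ)/(1+√λ)). -/

import Mathlib

open Real

noncomputable def K (k : ℝ) : ℝ := ∫ θ in (0:ℝ)..(π/2), 1 / Real.sqrt (1 - k^2 * Real.sin θ ^ 2)

namespace Landen

noncomputable def φ (p θ : ℝ) : ℝ :=
  2*θ - arctan ((1-p)*Real.sin θ*Real.cos θ / (Real.cos θ^2 + p*Real.sin θ^2))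

noncomputable def φ' (p θ : ℝ) : ℝ :=
  (1+p)*(Real.cos θ^2 + p*Real.sin θ^2) / (1 - (1-p^2)*Real.sin θ^2)

lemma hD {p : ℝ} (hp0 : 0 < p) (hp1 : p < 1) (θ : ℝ) :
    0 < Real.cos θ^2 + p*Real.sin θ^2 := by
  have h1 := Real.sin_sq_le_one θ
  have h2 := sin_sq_add_cos_sq θ
  nlinarith [mul_nonneg (sub_nonneg.2 hp1.le) (sub_nonneg.2 h1)]

lemma hΔ {p : ℝ} (hp0 : 0 < p) (hp1 : p < 1) (θ : ℝ) :
    0 < 1 - (1-p^2)*Real.sin θ^2 := by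
  have h1 := Real.sin_sq_le_one θ
  have hp2 : p^2 < 1 := by nlinarith
  nlinarith [mul_nonneg (sub_nonneg.2 hp2.le) (sub_nonneg.2 h1), sq_nonneg p]

lemma hsum (p θ : ℝ) :
    ((1-p)*Real.sin θ*Real.cos θ)^2 + (Real.cos θ^2 + p*Real.sin θ^2)^2
      = 1 - (1-p^2)*Real.sin θ^2 := by
  have h := sin_sq_add_cos_sq θ
  linear_combination (p^2*Real.sin θ^2 + Real.cos θ^2 + 1) * h

lemma hderiv {p : ℝ} (hp0 : 0 < p) (hp1 : p < 1) (θ : ℝ) :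
    HasDerivAt (φ p) (φ' p θ) θ := by
  have hs := Real.hasDerivAt_sin θ
  have hc := Real.hasDerivAt_cos θ
  have hN : HasDerivAt (fun θ => (1-p)*Real.sin θ*Real.cos θ)
      ((1-p)*Real.cos θ*Real.cos θ + (1-p)*Real.sin θ*(-Real.sin θ)) θ :=
    (hs.const_mul (1-p)).mul hc
  have hDd : HasDerivAt (fun θ => Real.cos θ^2 + p*Real.sin θ^2)
      (2*Real.cos θ*(-Real.sin θ) + p*(2*Real.sin θ*Real.cos θ)) θ := by
    have h1 : HasDerivAt (fun θ => Real.cos θ^2) (2*Real.cos θ*(-Real.sin θ)) θ := by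
      simpa [mul_comm] using (hc.fun_pow 2)
    have h2 : HasDerivAt (fun θ => p*Real.sin θ^2) (p*(2*Real.sin θ*Real.cos θ)) θ := by
      have := (hs.pow 2).const_mul p
      simpa [mul_comm, mul_assoc, mul_left_comm] using this
    exact h1.add h2
  have hq := hN.div hDd (ne_of_gt (hD hp0 hp1 θ))
  have ha := (Real.hasDerivAt_arctan _).comp θ hq
  have h2θ : HasDerivAt (fun θ : ℝ => 2*θ) 2 θ := by
    simpa using (hasDerivAt_id θ).const_mul 2
  have h := h2θ.sub ha
  refine h.congr_deriv ?_
  symm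
  unfold φ'
  simp only [Pi.div_apply]
  set s := Real.sin θ
  set c := Real.cos θ
  have hpy : s^2 + c^2 = 1 := sin_sq_add_cos_sq θ
  have hDpos := hD hp0 hp1 θ
  have hΔpos := hΔ hp0 hp1 θ
  have hsum' := hsum p θ
  have h1 : 1 + ((1-p)*s*c / (c^2+p*s^2))^2
      = (1-(1-p^2)*s^2)/(c^2+p*s^2)^2 := by
    rw [div_pow, eq_div_iff (pow_ne_zero 2 (ne_of_gt hDpos) : (c^2+p*s^2)^2 ≠ 0), add_mul, one_mul,
      div_mul_cancel₀ _ (pow_ne_zero 2 (ne_of_gt hDpos) : (c^2+p*s^2)^2 ≠ 0)]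
    linear_combination (hsum' : ((1-p)*s*c)^2 + (c^2+p*s^2)^2 = 1-(1-p^2)*s^2)
  have key : ((1-p)*c*c + (1-p)*s*(-s))*(c^2+p*s^2) - (1-p)*s*c*(2*c*(-s)+p*(2*s*c))
      = 2*(1-(1-p^2)*s^2) - (1+p)*(c^2+p*s^2) := by
    linear_combination ((1-p)*(1-s^2+c^2) + (1-p)^2*s^2 + (1+p)) * hpy
  rw [h1, key]
  have hΔne : (1-(1-p^2)*s^2) ≠ 0 := ne_of_gt hΔpos
  have hDne : c^2+p*s^2 ≠ 0 := ne_of_gt hDpos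
  field_simp
  have hinv : (1-(1-p^2)*s^2) * (1-(1-p^2)*s^2)⁻¹ = 1 := mul_inv_cancel₀ hΔne
  linear_combination 2 * hinv

lemma hsinφ {p : ℝ} (hp0 : 0 < p) (hp1 : p < 1) (θ : ℝ) :
    Real.sin (φ p θ)
      = (1+p)*Real.sin θ*Real.cos θ / Real.sqrt (1 - (1-p^2)*Real.sin θ^2) := by
  have hDpos := hD hp0 hp1 θ
  have hΔpos := hΔ hp0 hp1 θ
  have hsum' := hsum p θ
  set s := Real.sin θ with hsdef
  set c := Real.cos θ with hcdef
  have hpy : s^2 + c^2 = 1 := sin_sq_add_cos_sq θ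
  set u := (1-p)*s*c / (c^2+p*s^2) with hu
  have h1 : Real.sqrt (1 + u^2) = Real.sqrt (1-(1-p^2)*s^2) / (c^2+p*s^2) := by
    rw [eq_div_iff (ne_of_gt hDpos), ← Real.sqrt_sq hDpos.le,
      ← Real.sqrt_mul (by positivity)]
    congr 1
    rw [hu, div_pow, add_mul, one_mul, div_mul_cancel₀ _ (pow_ne_zero 2 hDpos.ne')]
    linear_combination hsum'
  have hsq : (0:ℝ) < Real.sqrt (1-(1-p^2)*s^2) := Real.sqrt_pos.2 hΔpos
  unfold φ
  rw [Real.sin_sub, Real.cos_arctan, Real.sin_arctan, ← hsdef, ← hcdef, ← hu, h1,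
    Real.sin_two_mul, Real.cos_two_mul', ← hsdef, ← hcdef]
  rw [hu]
  field_simp
  have hsq' : Real.sqrt (1 - s^2*(1-p^2)) ≠ 0 := by
    rw [show 1 - s^2*(1-p^2) = 1-(1-p^2)*s^2 by ring]; exact hsq.ne'
  rw [div_eq_div_iff (mul_ne_zero hsq' (by linarith [hDpos] : (0:ℝ) < c^2+s^2*p).ne') hsq']
  linear_combination (s*c*(c^2+s^2*p)*Real.sqrt (1 - s^2*(1-p^2))*(1+p)) * hpy

lemma hk1 {p : ℝ} (hp0 : 0 < p) (_hp1 : p < 1) (x : ℝ) :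
    0 < 1 - ((1-p)/(1+p))^2 * Real.sin x^2 := by
  have h1 := Real.sin_sq_le_one x
  have h2 : ((1-p)/(1+p))^2 < 1 := by
    rw [div_pow, div_lt_one (by positivity)]
    nlinarith
  nlinarith [mul_nonneg (sq_nonneg ((1-p)/(1+p))) (sub_nonneg.2 h1)]

lemma hpt {p : ℝ} (hp0 : 0 < p) (hp1 : p < 1) (x : ℝ) :
    φ' p x * (1 / Real.sqrt (1 - ((1-p)/(1+p))^2 * Real.sin (φ p x)^2))
      = (1+p) * (1 / Real.sqrt (1 - (1-p^2)*Real.sin x^2)) := by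
  have hDpos := hD hp0 hp1 x
  have hΔpos := hΔ hp0 hp1 x
  have hsin := hsinφ hp0 hp1 x
  have hsum' := hsum p x
  set s := Real.sin x
  set c := Real.cos x
  have hpy : s^2 + c^2 = 1 := sin_sq_add_cos_sq x
  have hsq : (0:ℝ) < Real.sqrt (1-(1-p^2)*s^2) := Real.sqrt_pos.2 hΔpos
  have h2 : 1 - ((1-p)/(1+p))^2 * Real.sin (φ p x)^2
      = (c^2+p*s^2)^2 / (1-(1-p^2)*s^2) := by
    have hA : ((1-p)/(1+p))^2 * Real.sin (φ p x)^2
        = (1-p)^2*s^2*c^2/(1-(1-p^2)*s^2) := by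
      rw [hsin, div_pow ((1+p)*s*c), Real.sq_sqrt hΔpos.le, div_pow (1-p)]
      rw [div_mul_div_comm, div_eq_div_iff
        (by positivity : ((1+p)^2*(1-(1-p^2)*s^2)) ≠ 0) hΔpos.ne']
      ring
    rw [hA, eq_div_iff hΔpos.ne', sub_mul, one_mul, div_mul_cancel₀ _ hΔpos.ne']
    linear_combination -hsum'
  have h3 : Real.sqrt ((c^2+p*s^2)^2 / (1-(1-p^2)*s^2))
      = (c^2+p*s^2) / Real.sqrt (1-(1-p^2)*s^2) := by
    rw [Real.sqrt_div (sq_nonneg _), Real.sqrt_sq hDpos.le]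
  rw [h2, h3, one_div ((c^2+p*s^2) / Real.sqrt (1-(1-p^2)*s^2)), inv_div, mul_one_div]
  unfold φ'
  rw [div_mul_div_comm, div_eq_div_iff (by positivity) hsq.ne']
  have hms : Real.sqrt (1-(1-p^2)*s^2) * Real.sqrt (1-(1-p^2)*s^2) = 1-(1-p^2)*s^2 :=
    Real.mul_self_sqrt hΔpos.le
  linear_combination ((1+p)*(c^2+p*s^2)) * hms

lemma landen {p : ℝ} (hp0 : 0 < p) (hp1 : p < 1) :
    (1+p) * ∫ x in (0:ℝ)..(π/2), 1 / Real.sqrt (1 - (1-p^2)*Real.sin x^2)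
      = 2 * ∫ x in (0:ℝ)..(π/2), 1 / Real.sqrt (1 - ((1-p)/(1+p))^2*Real.sin x^2) := by
  set g : ℝ → ℝ := fun x => 1 / Real.sqrt (1 - ((1-p)/(1+p))^2*Real.sin x^2) with hg
  have hgpos := hk1 hp0 hp1
  have hgc : Continuous g := by
    apply continuous_const.div
    · exact Real.continuous_sqrt.comp (by continuity)
    · intro x; exact ne_of_gt (Real.sqrt_pos.2 (hgpos x))
  have hφ'c : Continuous (φ' p) := by
    apply Continuous.div
    · continuity
    · continuity
    · intro x; exact ne_of_gt (hΔ hp0 hp1 x)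
  have hsub := intervalIntegral.integral_comp_smul_deriv
    (f := φ p) (f' := φ' p) (g := g) (a := 0) (b := π/2)
    (fun x _ => hderiv hp0 hp1 x) hφ'c.continuousOn hgc
  have hφ0 : φ p 0 = 0 := by simp [φ]
  have hφπ : φ p (π/2) = π := by
    simp [φ, Real.sin_pi_div_two, Real.cos_pi_div_two]
    ring
  rw [hφ0, hφπ] at hsub
  have hL : (∫ x in (0:ℝ)..(π/2), φ' p x • (g ∘ φ p) x)
      = ∫ x in (0:ℝ)..(π/2), (1+p) * (1 / Real.sqrt (1 - (1-p^2)*Real.sin x^2)) := by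
    apply intervalIntegral.integral_congr
    intro x _
    simp only [smul_eq_mul, Function.comp_apply, hg]
    exact hpt hp0 hp1 x
  have hint : ∀ a b : ℝ, IntervalIntegrable g MeasureTheory.volume a b :=
    fun a b => hgc.intervalIntegrable a b
  have hsplit := intervalIntegral.integral_add_adjacent_intervals
    (hint 0 (π/2)) (hint (π/2) π)
  have hrefl : (∫ x in (π/2:ℝ)..π, g x) = ∫ x in (0:ℝ)..(π/2), g x := by
    have h := intervalIntegral.integral_comp_sub_left (a := 0) (b := π/2) g π
    simp only [sub_zero] at h
    rw [show π - π/2 = π/2 by ring] at h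
    rw [← h]
    apply intervalIntegral.integral_congr
    intro x _
    simp [hg, Real.sin_pi_sub]
  rw [← intervalIntegral.integral_const_mul, ← hL, hsub]
  linarith [hsplit, hrefl]

end Landen

theorem stmt_8 (l : ℝ) (h₀ : 0 < l) (h₁ : l < 1) :
    K (Real.sqrt (1 - l)) =
      (2 / (1 + Real.sqrt l)) * K ((1 - Real.sqrt l) / (1 + Real.sqrt l)) := by
  set p := Real.sqrt l with hp
  have hp0 : 0 < p := Real.sqrt_pos.2 h₀
  have hps : p^2 = l := Real.sq_sqrt h₀.le
  have hp1 : p < 1 := by nlinarith [Real.sqrt_nonneg l]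
  have h1l : (Real.sqrt (1-l))^2 = 1 - l := Real.sq_sqrt (by linarith)
  have hK1 : K (Real.sqrt (1-l))
      = ∫ x in (0:ℝ)..(π/2), 1 / Real.sqrt (1 - (1-p^2)*Real.sin x^2) := by
    unfold K
    simp only [h1l, hps]
  have hland := Landen.landen hp0 hp1
  have h1p : (0:ℝ) < 1 + p := by linarith
  rw [hK1]
  unfold K
  rw [div_mul_eq_mul_div, eq_div_iff (ne_of_gt h1p)]
  linear_combination hland
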